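/- (Sensitivity of the equilibrium reference to irrelevant covariates.) In the linear model, suppose β = 0 and δ = 0 (the covariates X do not enter the potential outcomes). Then the explained parts under the standard references and under Jann's pooled reference all vanish: Δ_X⁰ = Δ_X¹ = Δ_X³ = 0, where Δ_X^r = E[Y(r) | D = 1] − E[Y(r) | D = 0] with Y(3) = π·Y(1) + (1 − π)·Y(0) and π = P(D = 1); whereas the explained part under the equilibrium reference Y(2) = p₁·Y(1) + (1 − p₁)·Y(0) equals Δ_X² = (E[p₁ | D = 1] − E[p₁ | D = 0])·γ, which is in general nonzero. -/

import Mathlib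

open MeasureTheory ProbabilityTheory

/-- `E[Z | D = d]`: the conditional mean of `Z` given group membership `D = d`,
i.e. `E[Z · 𝟙{D = d}] / P(D = d)`. -/
noncomputable def condMean {Ω : Type*} {m : MeasurableSpace Ω} (P : Measure Ω)
    (Z : Ω → ℝ) (D : Ω → ℕ) (d : ℕ) : ℝ :=
  (∫ ω, Z ω * (if D ω = d then (1:ℝ) else 0) ∂P) / (P {ω | D ω = d}).toReal

/-- sensitivity of the equilibrium reference to irrelevant covariates.
If `β = 0` and `δ = 0`, the explained parts under the standard references and Jann's pooled
reference vanish, while the explained part under the equilibrium reference equals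
`(E[p₁ | D = 1] - E[p₁ | D = 0])·γ`. -/
theorem stmt_19
    {Ω : Type*} [mΩ : MeasurableSpace Ω]
    (P : Measure Ω) [IsProbabilityMeasure P]
    {k : ℕ} (X : Ω → Fin k → ℝ) (hX : Measurable X)
    (hXint : ∀ i, Integrable (fun ω => X ω i) P)
    (D : Ω → ℕ) (hD : Measurable D) (hD01 : ∀ ω, D ω = 0 ∨ D ω = 1)
    (hD1pos : 0 < P {ω | D ω = 1}) (hD1lt : P {ω | D ω = 1} < 1)
    (α γ : ℝ) (β δ : Fin k → ℝ)
    (ε : Ω → ℝ) (hεint : Integrable ε P)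
    (hε : P[ε | MeasurableSpace.comap X inferInstance ⊔ MeasurableSpace.comap D inferInstance]
      =ᵐ[P] 0)
    (Y : ℕ → Ω → ℝ)
    (hY0 : ∀ ω, Y 0 ω = α + (∑ i, X ω i * β i) + ε ω)
    (hY1 : ∀ ω, Y 1 ω = α + γ + (∑ i, X ω i * (β i + δ i)) + ε ω)
    (𝒢 : MeasurableSpace Ω) (h𝒢 : 𝒢 = MeasurableSpace.comap X inferInstance)
    (p₁ : Ω → ℝ) (hp₁meas : Measurable[𝒢] p₁)
    (hp₁ : p₁ =ᵐ[P] P[fun ω => (D ω : ℝ) | 𝒢])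
    (hp₁0 : ∀ ω, 0 ≤ p₁ ω) (hp₁1 : ∀ ω, p₁ ω ≤ 1)
    (hβ : β = 0) (hδ : δ = 0)
    (π : ℝ) (hπ : π = (P {ω | D ω = 1}).toReal)
    (Y3 : Ω → ℝ) (hY3 : ∀ ω, Y3 ω = π * Y 1 ω + (1 - π) * Y 0 ω)
    (Y2 : Ω → ℝ) (hY2 : ∀ ω, Y2 ω = p₁ ω * Y 1 ω + (1 - p₁ ω) * Y 0 ω) :
    condMean P (Y 0) D 1 - condMean P (Y 0) D 0 = 0
    ∧ condMean P (Y 1) D 1 - condMean P (Y 1) D 0 = 0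
    ∧ condMean P Y3 D 1 - condMean P Y3 D 0 = 0
    ∧ condMean P Y2 D 1 - condMean P Y2 D 0
      = (condMean P p₁ D 1 - condMean P p₁ D 0) * γ := by

  classical
  have hm' : (MeasurableSpace.comap X inferInstance ⊔ MeasurableSpace.comap D inferInstance)
      ≤ mΩ :=
    sup_le (measurable_iff_comap_le.mp hX) (measurable_iff_comap_le.mp hD)
  set s : ℕ → Set Ω := fun d => {ω | D ω = d} with hs
  have hsmeas : ∀ d, MeasurableSet[mΩ] (s d) := fun d => hD (measurableSet_singleton d)
  have hsm' : ∀ d, MeasurableSet[MeasurableSpace.comap X inferInstance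
      ⊔ MeasurableSpace.comap D inferInstance] (s d) := fun d =>
    le_sup_right (α := MeasurableSpace Ω) _ ⟨{d}, measurableSet_singleton d, rfl⟩
  -- the ε integral over each group vanishes
  have hεd : ∀ d : ℕ, ∫ ω in s d, ε ω ∂P = 0 := by
    intro d
    rw [← setIntegral_condExp hm' hεint (hsm' d)]
    rw [integral_congr_ae (ae_restrict_of_ae hε)]
    simp
  have hind : ∀ (d : ℕ) (g : Ω → ℝ),
      (fun ω => g ω * (if D ω = d then (1:ℝ) else 0)) = (s d).indicator g := by
    intro d g; funext ω
    by_cases h : D ω = d <;> simp [Set.indicator_apply, hs, h]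
  -- integrability of p₁
  have hp₁int : Integrable p₁ P := integrable_condExp.congr hp₁.symm
  clear hp₁meas hp₁ h𝒢 𝒢
  -- positivity of the group probabilities
  have ha1 : (P (s 1)).toReal ≠ 0 :=
    (ENNReal.toReal_pos hD1pos.ne' (measure_ne_top P _)).ne'
  have hcompl : s 0 = (s 1)ᶜ := by
    ext ω; simp only [hs, Set.mem_setOf_eq, Set.mem_compl_iff]
    rcases hD01 ω with h | h <;> simp [h]
  have ha0 : (P (s 0)).toReal ≠ 0 := by
    have h0 : P (s 0) = 1 - P (s 1) := by
      rw [hcompl, measure_compl (hsmeas 1) (measure_ne_top P _), measure_univ]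
    have hpos : (0:ENNReal) < 1 - P (s 1) := tsub_pos_of_lt hD1lt
    have hfin : (1:ENNReal) - P (s 1) ≠ ⊤ :=
      (lt_of_le_of_lt tsub_le_self (by simp)).ne
    rw [h0]
    exact (ENNReal.toReal_pos hpos.ne' hfin).ne'
  -- key computation
  have key : ∀ (c t : ℝ) (d : ℕ), (P (s d)).toReal ≠ 0 →
      condMean P (fun ω => c + t * p₁ ω + ε ω) D d = c + t * condMean P p₁ D d := by
    intro c t d had
    unfold condMean
    rw [hind d, hind d, integral_indicator (hsmeas d), integral_indicator (hsmeas d)]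
    have h1 : IntegrableOn (fun _ : Ω => c) (s d) P := (integrable_const c).integrableOn
    have h2 : IntegrableOn (fun ω => t * p₁ ω) (s d) P := (hp₁int.const_mul t).integrableOn
    have h3 : IntegrableOn ε (s d) P := hεint.integrableOn
    have h12 : IntegrableOn (fun ω => c + t * p₁ ω) (s d) P := h1.add h2
    rw [integral_add h12 h3, integral_add h1 h2, hεd d, setIntegral_const,
      integral_const_mul, smul_eq_mul]
    field_simp
    simp only [hs, measureReal_def] at had ⊢
    field_simp
    ring
  have hY0' : Y 0 = fun ω => α + 0 * p₁ ω + ε ω := by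
    funext ω; rw [hY0 ω]; simp [hβ]
  have hY1' : Y 1 = fun ω => (α + γ) + 0 * p₁ ω + ε ω := by
    funext ω; rw [hY1 ω]; simp [hβ, hδ]
  have hY3' : Y3 = fun ω => (α + π * γ) + 0 * p₁ ω + ε ω := by
    funext ω; rw [hY3 ω, hY0 ω, hY1 ω]; simp [hβ, hδ]; ring
  have hY2' : Y2 = fun ω => α + γ * p₁ ω + ε ω := by
    funext ω; rw [hY2 ω, hY0 ω, hY1 ω]; simp [hβ, hδ]; ring
  have K := key
  refine ⟨?_, ?_, ?_, ?_⟩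
  · rw [hY0', key _ _ 1 ha1, key _ _ 0 ha0]; ring
  · rw [hY1', key _ _ 1 ha1, key _ _ 0 ha0]; ring
  · rw [hY3', key _ _ 1 ha1, key _ _ 0 ha0]; ring
  · rw [hY2', key _ _ 1 ha1, key _ _ 0 ha0]; ring
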